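/- arXiv:0801.0586 — 2 statements merged into one kernel-verified Lean document; each statement's English description precedes it below -/
import Mathlib

section
/- Let n ≥ 1, let d be an even positive integer, and let T be the Chebyshev polynomial of the first kind of degree d. Let q_1 < … < q_m be the m smallest prime numbers greater than n, and for 1 ≤ i ≤ m set g_i^+(x) = n + 1/q_i + ∑_{k=1}^{n} T(x_k)/(q_i − n − 1 + k). Then for every subset {i_1,…,i_s} ⊆ {1,…,m} with s ≥ n+1: (i) the polynomials g_{i_1}^+,…,g_{i_s}^+ have no common zero in ℂⁿ; and (ii) the homogeneous polynomials ∑_{k=1}^{n} x_k^d/(q_{i_j} − n − 1 + k), j = 1,…,s, have no common zero in ℂⁿ ∖ {0}. -/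
namespace Stmt9
open Polynomial Finset

noncomputable def nodes (n : ℕ) (j : Fin n) : ℂ := (n : ℂ) - (j : ℕ)

lemma nodes_cast (n : ℕ) (j : Fin n) : nodes n j = ((n - (j : ℕ) : ℕ) : ℂ) := by
  have : (j : ℕ) ≤ n := j.isLt.le
  unfold nodes; push_cast [this]; ring

lemma nodes_inj (n : ℕ) : Function.Injective (nodes n) := by
  intro i j h
  unfold nodes at h
  have : ((i : ℕ) : ℂ) = ((j : ℕ) : ℂ) := by linear_combination -h
  exact Fin.ext (Nat.cast_injective this)

lemma cast_coef (n q : ℕ) (hq : n < q) (k : Fin n) :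
    ((q - n - 1 + ((k : ℕ) + 1) : ℕ) : ℂ) = (q : ℂ) - nodes n k := by
  obtain ⟨r, rfl⟩ : ∃ r, q = n + 1 + r := ⟨q - (n + 1), by omega⟩
  have h1 : (n + 1 + r) - n - 1 + ((k : ℕ) + 1) = r + (k : ℕ) + 1 := by omega
  rw [h1]; unfold nodes; push_cast; ring

lemma sub_nodes_ne (n q : ℕ) (hq : n < q) (k : Fin n) : (q : ℂ) - nodes n k ≠ 0 := by
  rw [← cast_coef n q hq k]
  exact Nat.cast_ne_zero.mpr (by omega)

noncomputable def Sig (n : ℕ) (y : Fin n → ℂ) : ℂ[X] :=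
  ∑ k, C (y k) * ∏ j ∈ univ.erase k, (X - C (nodes n j))

lemma eval_Sig (n : ℕ) (y : Fin n → ℂ) (t : ℂ) :
    eval t (Sig n y) = ∑ k, y k * ∏ j ∈ univ.erase k, (t - nodes n j) := by
  simp [Sig, eval_finset_sum, eval_prod]

lemma eval_Sig' (n : ℕ) (y : Fin n → ℂ) (t : ℂ) (ht : ∀ j, t - nodes n j ≠ 0) :
    eval t (Sig n y) =
      (∏ j, (t - nodes n j)) * ∑ k, (t - nodes n k)⁻¹ * y k := by
  rw [eval_Sig, Finset.mul_sum]
  refine Finset.sum_congr rfl fun k _ => ?_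
  rw [← Finset.mul_prod_erase univ _ (mem_univ k)]
  rw [show ((t - nodes n k) * ∏ x ∈ univ.erase k, (t - nodes n x)) * ((t - nodes n k)⁻¹ * y k)
      = ((t - nodes n k) * (t - nodes n k)⁻¹) * (y k * ∏ x ∈ univ.erase k, (t - nodes n x)) by ring,
    mul_inv_cancel₀ (ht k), one_mul]

lemma natDegree_prod_nodes (n : ℕ) (s : Finset (Fin n)) :
    (∏ j ∈ s, (X - C (nodes n j))).natDegree = s.card := by
  rw [natDegree_prod_of_monic _ _ (fun j _ => monic_X_sub_C _)]
  simp

lemma natDegree_Sig (n : ℕ) (y : Fin n → ℂ) : (Sig n y).natDegree ≤ n - 1 := by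
  refine (natDegree_sum_le _ _).trans ?_
  rw [Finset.fold_max_le]
  refine ⟨Nat.zero_le _, fun k _ => ?_⟩
  refine (natDegree_mul_le).trans ?_
  simp [natDegree_prod_nodes, Finset.card_erase_of_mem]

lemma keyII (n : ℕ) (hn : 0 < n) (y : Fin n → ℂ) (T : Finset ℂ) (hT : n ≤ T.card)
    (hzero : ∀ t ∈ T, (∀ j, t - nodes n j ≠ 0) ∧ ∑ k, (t - nodes n k)⁻¹ * y k = 0) :
    ∀ k, y k = 0 := by
  have hS0 : Sig n y = 0 := by
    refine eq_zero_of_natDegree_lt_card_of_eval_eq_zero' _ T (fun t ht => ?_) ?_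
    · rw [eval_Sig' n y t (hzero t ht).1, (hzero t ht).2, mul_zero]
    · exact lt_of_le_of_lt (natDegree_Sig n y) (by omega)
  intro k
  have h0 : eval (nodes n k) (Sig n y) = 0 := by rw [hS0]; simp
  rw [eval_Sig] at h0
  have hred : ∀ l ∈ (univ : Finset (Fin n)), l ≠ k →
      y l * ∏ j ∈ univ.erase l, (nodes n k - nodes n j) = 0 := by
    intro l _ hl
    have hk : k ∈ (univ : Finset (Fin n)).erase l := Finset.mem_erase.mpr ⟨hl.symm, mem_univ k⟩
    have hz : nodes n k - nodes n k = 0 := sub_self _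
    rw [Finset.prod_eq_zero hk hz, mul_zero]
  rw [Finset.sum_eq_single k hred (fun h => absurd (mem_univ k) h)] at h0
  rcases mul_eq_zero.mp h0 with h | h
  · exact h
  · exfalso
    refine Finset.prod_ne_zero_iff.mpr (fun j hj => ?_) h
    exact sub_ne_zero.mpr fun he => (Finset.mem_erase.mp hj).1 (nodes_inj n he.symm)

lemma keyI (n : ℕ) (hn : 0 < n) (y : Fin n → ℂ) (T : Finset ℕ) (hTcard : T.card = n + 1)
    (hTn : ∀ t ∈ T, n < t)
    (hzero : ∀ t ∈ T, (n : ℂ) + (t : ℂ)⁻¹ + ∑ k, ((t : ℂ) - nodes n k)⁻¹ * y k = 0) :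
    False := by
  set A : ℂ[X] := ∏ j, (X - C (nodes n j)) with hAdef
  set Tc : Finset ℂ := T.image (Nat.cast : ℕ → ℂ) with hTcdef
  have hTccard : Tc.card = n + 1 := by
    rw [hTcdef, Finset.card_image_of_injective _ Nat.cast_injective, hTcard]
  set B : ℂ[X] := ∏ t ∈ Tc, (X - C t) with hBdef
  set P : ℂ[X] := C (n : ℂ) * (X * A) + A + X * Sig n y with hPdef
  have hAdeg : A.natDegree = n := by
    rw [hAdef, natDegree_prod_nodes]; simp
  have hAmonic : A.Monic := monic_prod_of_monic _ _ (fun j _ => monic_X_sub_C _)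
  have hBdeg : B.natDegree = n + 1 := by
    rw [hBdef, natDegree_prod_of_monic _ _ (fun t _ => monic_X_sub_C _)]
    simp [hTccard]
  have hBmonic : B.Monic := monic_prod_of_monic _ _ (fun t _ => monic_X_sub_C _)
  -- roots
  have hroot : ∀ t ∈ Tc, eval t (P - C (n : ℂ) * B) = 0 := by
    intro t ht
    obtain ⟨tq, htq, rfl⟩ := Finset.mem_image.mp ht
    have ht0 : ((tq : ℂ)) ≠ 0 := Nat.cast_ne_zero.mpr (by have := hTn tq htq; omega)
    have htj : ∀ j, (tq : ℂ) - nodes n j ≠ 0 := sub_nodes_ne n tq (hTn tq htq)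
    have hPeval : eval (tq : ℂ) P = (tq : ℂ) * (∏ j, ((tq : ℂ) - nodes n j)) *
        ((n : ℂ) + ((tq : ℂ))⁻¹ + ∑ k, ((tq : ℂ) - nodes n k)⁻¹ * y k) := by
      rw [hPdef]
      simp only [eval_add, eval_mul, eval_C, eval_X, hAdef, eval_prod, eval_sub, eval_X, eval_C,
        eval_Sig' n y _ htj]
      rw [show (tq : ℂ) * (∏ j, ((tq : ℂ) - nodes n j)) *
          ((n : ℂ) + ((tq : ℂ))⁻¹ + ∑ k, ((tq : ℂ) - nodes n k)⁻¹ * y k)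
          = (n : ℂ) * ((tq : ℂ) * ∏ j, ((tq : ℂ) - nodes n j))
            + ((tq : ℂ) * ((tq : ℂ))⁻¹) * (∏ j, ((tq : ℂ) - nodes n j))
            + (tq : ℂ) * ((∏ j, ((tq : ℂ) - nodes n j)) *
                ∑ k, ((tq : ℂ) - nodes n k)⁻¹ * y k) by ring,
        mul_inv_cancel₀ ht0, one_mul]
    have hBeval : eval (tq : ℂ) B = 0 := by
      rw [hBdef, eval_prod]
      exact Finset.prod_eq_zero ht (by simp)
    rw [eval_sub, eval_mul, hPeval, hzero tq htq, hBeval, eval_C]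
    ring
  -- degree
  have hSigdeg := natDegree_Sig n y
  have hdeg : (P - C (n : ℂ) * B).natDegree ≤ n := by
    refine natDegree_le_iff_coeff_eq_zero.mpr (fun N hN => ?_)
    obtain ⟨M, rfl⟩ : ∃ M, N = M + 1 := ⟨N - 1, by omega⟩
    have hM : n ≤ M := by omega
    simp only [hPdef, coeff_sub, coeff_add, coeff_C_mul, coeff_X_mul]
    have hSigM : (Sig n y).coeff M = 0 :=
      coeff_eq_zero_of_natDegree_lt (by omega)
    have hAM1 : A.coeff (M + 1) = 0 :=
      coeff_eq_zero_of_natDegree_lt (by omega)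
    by_cases hMn : M = n
    · have h1 : A.coeff M = 1 := by
        have := hAmonic.coeff_natDegree; rw [hAdeg] at this; rwa [hMn]
      have h2 : B.coeff (M + 1) = 1 := by
        have := hBmonic.coeff_natDegree; rw [hBdeg] at this; rwa [hMn]
      rw [h1, h2, hAM1, hSigM]; ring
    · have h1 : A.coeff M = 0 := coeff_eq_zero_of_natDegree_lt (by omega)
      have h2 : B.coeff (M + 1) = 0 := coeff_eq_zero_of_natDegree_lt (by omega)
      rw [h1, h2, hAM1, hSigM]; ring
  have hD0 : P - C (n : ℂ) * B = 0 := by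
    refine eq_zero_of_natDegree_lt_card_of_eval_eq_zero' _ Tc hroot ?_
    omega
  -- evaluate at 0
  have h0 : eval 0 P = (n : ℂ) * eval 0 B := by
    have := congrArg (eval 0) hD0
    rw [eval_sub, eval_mul, eval_C, eval_zero, sub_eq_zero] at this
    exact this
  have hP0 : eval 0 P = ∏ j, (0 - nodes n j) := by
    rw [hPdef]
    simp [hAdef, eval_prod]
  have hB0 : eval 0 B = ∏ t ∈ T, (0 - (t : ℂ)) := by
    rw [hBdef, eval_prod, hTcdef, Finset.prod_image
      (fun a _ b _ h => Nat.cast_injective h)]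
    simp
  rw [hP0, hB0] at h0
  have hneg : ∀ (s : Finset ℕ) (f : ℕ → ℂ), ∏ t ∈ s, (0 - f t) = (-1) ^ s.card * ∏ t ∈ s, f t := by
    intro s f
    rw [← Finset.prod_const, ← Finset.prod_mul_distrib]
    exact Finset.prod_congr rfl (fun t _ => by ring)
  have hnegF : ∏ j : Fin n, (0 - nodes n j) = (-1) ^ n * ∏ j : Fin n, nodes n j := by
    rw [show ((-1 : ℂ)) ^ n = ∏ _j : Fin n, (-1 : ℂ) by simp, ← Finset.prod_mul_distrib]
    exact Finset.prod_congr rfl fun j _ => by ring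
  rw [hnegF, hneg T _, hTcard] at h0
  have hF : ∏ j : Fin n, nodes n j = ((∏ j : Fin n, (n - (j : ℕ)) : ℕ) : ℂ) := by
    rw [Nat.cast_prod]
    exact Finset.prod_congr rfl fun j _ => nodes_cast n j
  have hG : ∏ t ∈ T, ((t : ℕ) : ℂ) = ((∏ t ∈ T, t : ℕ) : ℂ) := by rw [Nat.cast_prod]
  rw [hF, hG] at h0
  have hne : ((-1 : ℂ)) ^ n ≠ 0 := pow_ne_zero _ (by norm_num)
  have h1 : ((∏ j : Fin n, (n - (j : ℕ)) : ℕ) : ℂ) = -((n : ℂ) * ((∏ t ∈ T, t : ℕ) : ℂ)) :=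
    mul_left_cancel₀ hne (h0.trans (by rw [pow_succ]; ring))
  have h2 : (((∏ j : Fin n, (n - (j : ℕ))) + n * ∏ t ∈ T, t : ℕ) : ℂ) = 0 := by
    rw [Nat.cast_add, Nat.cast_mul, h1]; ring
  have h3 : (∏ j : Fin n, (n - (j : ℕ))) + n * ∏ t ∈ T, t = 0 := Nat.cast_eq_zero.mp h2
  have hFpos : 0 < ∏ j : Fin n, (n - (j : ℕ)) :=
    Finset.prod_pos fun j _ => by have := j.isLt; omega
  omega

end Stmt9

open MvPolynomial

/-- Evaluation of the Chebyshev polynomial of the first kind of degree `d` at a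
complex number. -/
noncomputable def chebEval (d : ℕ) (z : ℂ) : ℂ :=
  Polynomial.eval z (Polynomial.Chebyshev.T ℂ d)

/-- `g_i^+(x) = n + 1/q_i + ∑_{k=1}^n T(x_k)/(q_i - n - 1 + k)`. -/
noncomputable def gplus (n : ℕ) (d : ℕ) (q : ℕ) (x : Fin n → ℂ) : ℂ :=
  (n : ℂ) + ((q : ℂ))⁻¹ +
    ∑ k : Fin n, (((q - n - 1 + ((k : ℕ) + 1) : ℕ) : ℂ))⁻¹ * chebEval d (x k)

theorem statement9 (n m : ℕ) (hn : 0 < n)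
    (d : ℕ) (hd0 : 0 < d) (hdeven : Even d)
    (q : Fin m → ℕ) (hqmono : StrictMono q)
    (hqprime : ∀ i, (q i).Prime) (hqn : ∀ i, n < q i)
    -- `q` lists the `m` smallest primes greater than `n`
    (hqsmall : ∀ i : Fin m, ∀ p : ℕ, p.Prime → n < p → p < q i → ∃ j : Fin m, q j = p) :
    ∀ S : Finset (Fin m), n + 1 ≤ S.card →
      (¬ ∃ x : Fin n → ℂ, ∀ i ∈ S, gplus n d (q i) x = 0) ∧
      (∀ x : Fin n → ℂ, x ≠ 0 →
        ¬ ∀ i ∈ S, ∑ k : Fin n,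
            (((q i - n - 1 + ((k : ℕ) + 1) : ℕ) : ℂ))⁻¹ * (x k) ^ d = 0) := by
  intro S hS
  have hcast_inj : Function.Injective (fun i : Fin m => ((q i : ℕ) : ℂ)) :=
    fun i j h => hqmono.injective (Nat.cast_injective h)
  constructor
  · rintro ⟨x, hx⟩
    obtain ⟨S', hS'sub, hS'card⟩ := Finset.exists_subset_card_eq hS
    refine Stmt9.keyI n hn (fun k => chebEval d (x k)) (S'.image q) ?_ ?_ ?_
    · rw [Finset.card_image_of_injective _ hqmono.injective, hS'card]
    · intro t ht
      obtain ⟨i, _, rfl⟩ := Finset.mem_image.mp ht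
      exact hqn i
    · intro t ht
      obtain ⟨i, hi, rfl⟩ := Finset.mem_image.mp ht
      have h := hx i (hS'sub hi)
      unfold gplus at h
      have hsum : ∑ k : Fin n, (((q i : ℕ) : ℂ) - Stmt9.nodes n k)⁻¹ * chebEval d (x k)
          = ∑ k : Fin n, (((q i - n - 1 + ((k : ℕ) + 1) : ℕ) : ℂ))⁻¹ * chebEval d (x k) :=
        Finset.sum_congr rfl fun k _ => by rw [Stmt9.cast_coef n (q i) (hqn i) k]
      rw [hsum]
      exact h
  · intro x hx h
    have hall : ∀ k, x k ^ d = 0 := by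
      refine Stmt9.keyII n hn _ (S.image (fun i => ((q i : ℕ) : ℂ))) ?_ ?_
      · rw [Finset.card_image_of_injective _ hcast_inj]; omega
      · intro t ht
        obtain ⟨i, hi, rfl⟩ := Finset.mem_image.mp ht
        refine ⟨Stmt9.sub_nodes_ne n (q i) (hqn i), ?_⟩
        have h2 := h i hi
        have hsum : ∑ k : Fin n, (((q i : ℕ) : ℂ) - Stmt9.nodes n k)⁻¹ * x k ^ d
            = ∑ k : Fin n, (((q i - n - 1 + ((k : ℕ) + 1) : ℕ) : ℂ))⁻¹ * x k ^ d :=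
          Finset.sum_congr rfl fun k _ => by rw [Stmt9.cast_coef n (q i) (hqn i) k]
        rw [hsum]
        exact h2
    apply hx
    funext k
    exact pow_eq_zero_iff hd0.ne' |>.mp (hall k)
end

section
/- Let f ∈ ℂ[x_1,x_2] be a nonconstant polynomial with no nonconstant factor in ℂ[x_1], and let g_1, g_2 ∈ ℂ[x_1,x_2] with f and g_1 coprime. Write f' = ∂f/∂x_2, let h be a greatest common divisor of f and f' in ℂ[x_1,x_2], and set h_1 = f/h, h_2 = f'/h. In ℂ[t,x_1,x_2], let F_1 = (1−t)f + t g_1, F_2 = (1−t)f' + t g_2, and let I be the ideal generated by F_1 and F_2. Then the saturation of I with respect to t equals the colon ideal (I : t), and both equal I + (h_2 g_1 − h_1 g_2); that is, for every p ∈ ℂ[t,x_1,x_2], the following are equivalent: (a) t·p ∈ I; (b) t^k·p ∈ I for some k ≥ 1; (c) p ∈ I + (h_2 g_1 − h_1 g_2). -/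
open MvPolynomial

/-- Inclusion `ℂ[x₁,x₂] → ℂ[t,x₁,x₂]`, where `t` is the variable of index `0`
and `x₁, x₂` become the variables of index `1, 2`. -/
noncomputable def incl : MvPolynomial (Fin 2) ℂ →ₐ[ℂ] MvPolynomial (Fin 3) ℂ :=
  rename Fin.succ

/-! ### Auxiliary machinery -/

/-- `ℂ[x₁,x₂] ≃ ℂ[x₁][x₂]`, pulling out the variable of index 1. -/
noncomputable def ψ : MvPolynomial (Fin 2) ℂ ≃ₐ[ℂ] Polynomial (MvPolynomial (Fin 1) ℂ) :=
  (renameEquiv ℂ (Equiv.swap (0 : Fin 2) 1)).trans (finSuccEquiv ℂ 1)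

lemma psi_X0 : ψ (X 0) = Polynomial.C (X 0) := by
  have : Equiv.swap (0 : Fin 2) 1 0 = 1 := by decide
  simp [ψ, this]
  rw [show (1 : Fin 2) = Fin.succ 0 from rfl, finSuccEquiv_X_succ]

lemma psi_X1 : ψ (X 1) = Polynomial.X := by
  have : Equiv.swap (0 : Fin 2) 1 1 = 0 := by decide
  simp [ψ, this, finSuccEquiv_X_zero]

lemma psi_C (a : ℂ) : ψ (C a) = Polynomial.C (C a) := by
  have h1 : (C a : MvPolynomial (Fin 2) ℂ) = algebraMap ℂ _ a := rfl
  rw [h1, AlgEquiv.commutes]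
  rfl

lemma psi_pderiv (p : MvPolynomial (Fin 2) ℂ) :
    ψ (pderiv 1 p) = Polynomial.derivative (ψ p) := by
  induction p using MvPolynomial.induction_on with
  | C a => rw [pderiv_C, map_zero, psi_C, Polynomial.derivative_C]
  | add p q hp hq => simp [map_add, hp, hq]
  | mul_X p i hp =>
    rw [pderiv_mul, map_add, map_mul, map_mul, map_mul, hp, Polynomial.derivative_mul]
    by_cases hi : i = 1
    · subst hi
      rw [pderiv_X_self, map_one, mul_one, psi_X1, Polynomial.derivative_X, mul_one]
    · have hi0 : i = 0 := by
        have h2 := i.isLt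
        have h3 : i.val ≠ 1 := fun h => hi (Fin.ext h)
        exact Fin.ext (by omega)
      subst hi0
      rw [pderiv_X_of_ne (by decide), map_zero, mul_zero, psi_X0, Polynomial.derivative_C,
        mul_zero]

/-- `ℂ[x₁] ≃ Polynomial ℂ`. -/
noncomputable def ρ : MvPolynomial (Fin 1) ℂ ≃ₐ[ℂ] Polynomial ℂ :=
  (finSuccEquiv ℂ 0).trans (Polynomial.mapAlgEquiv (isEmptyAlgEquiv ℂ (Fin 0)))

lemma rho_X0 : ρ (X 0) = Polynomial.X := by
  simp [ρ, finSuccEquiv_X_zero]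

lemma psi_aeval (w : Polynomial ℂ) :
    ψ (Polynomial.aeval (X (0 : Fin 2)) w) = Polynomial.C (ρ.symm w) := by
  have h : (ψ.toAlgHom.comp (Polynomial.aeval (X (0 : Fin 2)))) =
      (Polynomial.CAlgHom.comp ρ.symm.toAlgHom) := by
    apply Polynomial.algHom_ext
    simp [psi_X0, Polynomial.CAlgHom]
    have : ρ (X 0) = Polynomial.X := rho_X0
    exact ((AlgEquiv.symm_apply_eq ρ).mpr this.symm).symm
  exact congrFun (congrArg (fun g => g.toFun) h) w

lemma exists_poly_of_pderiv_eq_zero (p : MvPolynomial (Fin 2) ℂ) (hp : pderiv 1 p = 0) :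
    ∃ w : Polynomial ℂ, p = Polynomial.aeval (X (0 : Fin 2)) w := by
  have hd : Polynomial.derivative (ψ p) = 0 := by rw [← psi_pderiv, hp, map_zero]
  obtain ⟨r, hr⟩ : ∃ r, ψ p = Polynomial.C r :=
    ⟨(ψ p).coeff 0, Polynomial.eq_C_of_derivative_eq_zero hd⟩
  refine ⟨ρ r, ψ.injective ?_⟩
  rw [psi_aeval, AlgEquiv.symm_apply_apply, hr]

lemma not_dvd_pderiv_self (π : MvPolynomial (Fin 2) ℂ) (hd : pderiv 1 π ≠ 0) :
    ¬ π ∣ pderiv 1 π := by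
  intro hdvd
  have hψd : ψ (pderiv 1 π) ≠ 0 := fun h => hd (by
    have := ψ.injective (h.trans (map_zero ψ).symm); exact this)
  have hdvd' : ψ π ∣ Polynomial.derivative (ψ π) := by
    rw [← psi_pderiv]; exact map_dvd ψ.toAlgHom.toRingHom hdvd
  have hle : (ψ π).natDegree ≤ (Polynomial.derivative (ψ π)).natDegree :=
    Polynomial.natDegree_le_of_dvd hdvd' (by rw [← psi_pderiv]; exact hψd)
  by_cases h0 : (ψ π).natDegree = 0
  · have : Polynomial.derivative (ψ π) = 0 := by
      rw [Polynomial.eq_C_of_natDegree_eq_zero h0, Polynomial.derivative_C]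
    rw [← psi_pderiv] at this
    exact hψd this
  · exact absurd hle (not_le.mpr (Polynomial.natDegree_derivative_lt h0))

section Main

variable (f g₁ g₂ h h₁ h₂ : MvPolynomial (Fin 2) ℂ)
  (hfnc : ∀ c : ℂ, f ≠ C c)
  (hfx1 : ∀ w : Polynomial ℂ, Polynomial.aeval (X (0 : Fin 2)) w ∣ f → w.natDegree = 0)
  (hcop : ∀ u : MvPolynomial (Fin 2) ℂ, u ∣ f → u ∣ g₁ → IsUnit u)
  (hgcd : ∀ u : MvPolynomial (Fin 2) ℂ, u ∣ f → u ∣ pderiv (1 : Fin 2) f → u ∣ h)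
  (hco₁ : f = h * h₁) (hco₂ : pderiv (1 : Fin 2) f = h * h₂)

include hfnc in
lemma f_ne_zero : f ≠ 0 := fun h0 => hfnc 0 (by rw [h0, map_zero])

include hfx1 in
lemma prime_factor_deriv {π : MvPolynomial (Fin 2) ℂ} (hπ : Prime π) (hπf : π ∣ f) :
    pderiv 1 π ≠ 0 ∧ ¬ π ∣ pderiv 1 π := by
  have hd : pderiv 1 π ≠ 0 := by
    intro h0
    obtain ⟨w, hw⟩ := exists_poly_of_pderiv_eq_zero π h0
    have hdeg : w.natDegree = 0 := hfx1 w (by rw [← hw]; exact hπf)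
    have : π = C (w.coeff 0) := by
      rw [hw, Polynomial.eq_C_of_natDegree_eq_zero hdeg, Polynomial.aeval_C]
      simp [algebraMap_eq]
    rcases eq_or_ne (w.coeff 0) 0 with hc | hc
    · exact hπ.ne_zero (by rw [this, hc, map_zero])
    · exact hπ.not_unit (by rw [this]; exact (isUnit_iff_ne_zero.mpr hc).map C)
  exact ⟨hd, not_dvd_pderiv_self π hd⟩

include hfnc hfx1 hcop hgcd hco₁ hco₂ in
lemma prime_not_dvd_delta {π : MvPolynomial (Fin 2) ℂ} (hπ : Prime π) (hπh : π ∣ h) :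
    ¬ π ∣ (h₂ * g₁ - h₁ * g₂) := by
  have hf0 : f ≠ 0 := f_ne_zero f hfnc
  have hπ0 : π ≠ 0 := hπ.ne_zero
  have hπf : π ∣ f := hπh.trans ⟨h₁, hco₁⟩
  have hπf' : π ∣ pderiv 1 f := hπh.trans ⟨h₂, hco₂⟩
  obtain ⟨hd, hnd⟩ := prime_factor_deriv f hfx1 hπ hπf
  obtain ⟨e, u, hu, hfe⟩ := WfDvdMonoid.max_power_factor hf0 hπ.irreducible
  have he1 : 1 ≤ e := by
    rcases Nat.eq_zero_or_pos e with h0 | h1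
    · exfalso; apply hu; rw [h0, pow_zero, one_mul] at hfe; rw [← hfe]; exact hπf
    · exact h1
  set v : MvPolynomial (Fin 2) ℂ := (e : MvPolynomial (Fin 2) ℂ) * pderiv 1 π * u + π * pderiv 1 u
    with hv
  have hpe : π ^ e = π ^ (e - 1) * π := by
    rw [← pow_succ, show e - 1 + 1 = e from by omega]
  have hfd : pderiv 1 f = π ^ (e - 1) * v := by
    rw [hfe, Derivation.leibniz, Derivation.leibniz_pow]
    simp only [smul_eq_mul, nsmul_eq_mul]
    rw [hpe, hv]
    ring
  have hπv : ¬ π ∣ v := by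
    intro hdvdv
    have h1 : π ∣ (e : MvPolynomial (Fin 2) ℂ) * pderiv 1 π * u := by
      have := dvd_sub hdvdv (Dvd.intro _ rfl : π ∣ π * pderiv 1 u)
      simpa [hv] using this
    rcases hπ.dvd_or_dvd h1 with h2 | h2
    · rcases hπ.dvd_or_dvd h2 with h3 | h3
      · have hce : IsUnit ((e : MvPolynomial (Fin 2) ℂ)) := by
          rw [show ((e : MvPolynomial (Fin 2) ℂ)) = C (e : ℂ) from by simp]
          exact (isUnit_iff_ne_zero.mpr (by
            exact_mod_cast Nat.cast_ne_zero.mpr (by omega : e ≠ 0))).map C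
        exact hπ.not_unit (isUnit_of_dvd_unit h3 hce)
      · exact hnd h3
    · exact hu h2
  have he2 : 2 ≤ e := by
    by_contra hc
    have he : e = 1 := by omega
    apply hπv
    rw [hfd, he] at hπf'
    simpa using hπf'
  have hπe1h : π ^ (e - 1) ∣ h :=
    hgcd _ (by rw [hfe]; exact (pow_dvd_pow π (by omega)).mul_right u) ⟨v, hfd⟩
  obtain ⟨w, hw⟩ := hπe1h
  have hwh₂ : w * h₂ = v :=
    mul_left_cancel₀ (pow_ne_zero _ hπ0) (by rw [← mul_assoc, ← hw, ← hco₂, hfd])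
  have hπw : ¬ π ∣ w := fun hx => hπv (hwh₂ ▸ hx.mul_right h₂)
  have hπh₂ : ¬ π ∣ h₂ := fun hx => hπv (hwh₂ ▸ hx.mul_left w)
  have hwh₁ : w * h₁ = π * u :=
    mul_left_cancel₀ (pow_ne_zero (e - 1) hπ0)
      (by rw [← mul_assoc, ← hw, ← hco₁, hfe, hpe]; ring)
  have hπh₁ : π ∣ h₁ :=
    (hπ.dvd_or_dvd (hwh₁ ▸ dvd_mul_right π u)).resolve_left hπw
  have hπg₁ : ¬ π ∣ g₁ := fun hx => hπ.not_unit (hcop π hπf hx)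
  intro hπΔ
  have hx : π ∣ h₂ * g₁ := by
    have := dvd_add hπΔ (hπh₁.mul_right g₂)
    simpa using this
  rcases hπ.dvd_or_dvd hx with hy | hy
  · exact hπh₂ hy
  · exact hπg₁ hy

include hfnc hco₁ in
lemma h_ne_zero : h ≠ 0 := fun h0 => f_ne_zero _ hfnc (by rw [hco₁, h0, zero_mul])

include hfnc hfx1 hco₂ in
lemma fd_ne_zero : pderiv (1 : Fin 2) f ≠ 0 := by
  intro h0
  obtain ⟨w, hw⟩ := exists_poly_of_pderiv_eq_zero f h0
  have hdeg : w.natDegree = 0 := hfx1 w (by rw [← hw])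
  apply hfnc (w.coeff 0)
  rw [hw, Polynomial.eq_C_of_natDegree_eq_zero hdeg, Polynomial.aeval_C]
  simp [algebraMap_eq]

include hfnc hfx1 hcop hgcd hco₁ hco₂ in
lemma relprime_h_delta : IsRelPrime h (h₂ * g₁ - h₁ * g₂) := by
  intro u hu1 hu2
  by_contra hnu
  have hu0 : u ≠ 0 := fun h0 => h_ne_zero _ _ _ hfnc hco₁ (by
    rw [h0] at hu1; exact zero_dvd_iff.mp hu1)
  obtain ⟨π, hπi, hπu⟩ := WfDvdMonoid.exists_irreducible_factor hnu hu0
  have hπ : Prime π := (UniqueFactorizationMonoid.irreducible_iff_prime).mp hπi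
  exact prime_not_dvd_delta f g₁ g₂ h h₁ h₂ hfnc hfx1 hcop hgcd hco₁ hco₂ hπ
    (hπu.trans hu1) (hπu.trans hu2)

include hfnc hgcd hco₁ hco₂ in
lemma relprime_h2_h1 : IsRelPrime h₂ h₁ := by
  intro u hu2 hu1
  obtain ⟨k₂, hk₂⟩ := hu2
  obtain ⟨k₁, hk₁⟩ := hu1
  have hdvd : h * u ∣ h := hgcd _ ⟨k₁, by rw [hco₁, hk₁]; ring⟩ ⟨k₂, by rw [hco₂, hk₂]; ring⟩
  obtain ⟨v, hv⟩ := hdvd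
  have h0 : h ≠ 0 := h_ne_zero _ _ _ hfnc hco₁
  have huv : u * v = 1 := by
    rw [mul_assoc] at hv
    have h1 : h * 1 = h * (u * v) := by rw [mul_one, ← hv]
    exact (mul_left_cancel₀ h0 h1).symm
  exact IsUnit.of_mul_eq_one (a := u) v huv

include hfnc hfx1 hcop hgcd hco₁ hco₂ in
lemma syzygy_classify (A B Cc : MvPolynomial (Fin 2) ℂ)
    (heq : A * f + B * pderiv (1 : Fin 2) f + Cc * (h₂ * g₁ - h₁ * g₂) = 0) :
    ∃ s c : MvPolynomial (Fin 2) ℂ,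
      A = c * g₂ + s * h₂ ∧ B = -(c * g₁ + s * h₁) ∧ Cc = c * h := by
  have h0 : h ≠ 0 := h_ne_zero _ _ _ hfnc hco₁
  have hd0 : h₂ ≠ 0 := fun hz => fd_ne_zero _ _ _ hfnc hfx1 hco₂ (by rw [hco₂, hz, mul_zero])
  have hdvd : h ∣ Cc * (h₂ * g₁ - h₁ * g₂) :=
    ⟨-(A * h₁ + B * h₂), by linear_combination heq - A * hco₁ - B * hco₂⟩
  have hCc : h ∣ Cc :=
    (relprime_h_delta f g₁ g₂ h h₁ h₂ hfnc hfx1 hcop hgcd hco₁ hco₂).dvd_of_dvd_mul_right hdvd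
  obtain ⟨c, hc⟩ := hCc
  have heq2 : A * h₁ + B * h₂ + c * (h₂ * g₁ - h₁ * g₂) = 0 := by
    apply mul_left_cancel₀ h0
    rw [mul_zero]
    linear_combination heq - A * hco₁ - B * hco₂ - (h₂ * g₁ - h₁ * g₂) * hc
  have hdvd2 : h₂ ∣ (A - c * g₂) * h₁ := ⟨-(B + c * g₁), by linear_combination heq2⟩
  obtain ⟨s, hs⟩ := (relprime_h2_h1 _ _ _ _ hfnc hgcd hco₁ hco₂).dvd_of_dvd_mul_right hdvd2
  refine ⟨s, c, by linear_combination hs, ?_, by linear_combination hc⟩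
  apply mul_left_cancel₀ hd0
  linear_combination heq2 - h₁ * hs

end Main

/-- Evaluation `ℂ[t,x₁,x₂] → ℂ[x₁,x₂]` at `t = 0`. -/
noncomputable def ev0 : MvPolynomial (Fin 3) ℂ →ₐ[ℂ] MvPolynomial (Fin 2) ℂ :=
  aeval (Fin.cases 0 X)

lemma ev0_incl (p : MvPolynomial (Fin 2) ℂ) : ev0 (incl p) = p := by
  show ev0 (rename Fin.succ p) = p
  rw [ev0, aeval_rename]
  have : (Fin.cases 0 X ∘ Fin.succ : Fin 2 → MvPolynomial (Fin 2) ℂ) = X := by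
    funext i; simp
  rw [this]
  exact aeval_X_left_apply p

lemma ev0_t : ev0 (X (0 : Fin 3)) = 0 := by
  rw [ev0, aeval_X]; rfl

lemma sub_incl_ev0_mem (P : MvPolynomial (Fin 3) ℂ) :
    P - incl (ev0 P) ∈ Ideal.span {X (0 : Fin 3)} := by
  induction P using MvPolynomial.induction_on with
  | C a =>
    have : incl (ev0 (C a)) = C a := by
      rw [show (C a : MvPolynomial (Fin 3) ℂ) = algebraMap ℂ _ a from rfl,
        AlgHom.commutes, AlgHom.commutes]
    rw [this, sub_self]; exact Ideal.zero_mem _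
  | add p q hp hq =>
    rw [map_add, map_add]
    have heq : p + q - (incl (ev0 p) + incl (ev0 q))
        = (p - incl (ev0 p)) + (q - incl (ev0 q)) := by ring
    rw [heq]; exact Ideal.add_mem _ hp hq
  | mul_X p i hp =>
    rw [map_mul, map_mul]
    rcases Fin.eq_zero_or_eq_succ i with hi | ⟨j, hj⟩
    · subst hi
      rw [ev0_t, map_zero, mul_zero, sub_zero]
      exact Ideal.mul_mem_left _ p (Ideal.subset_span rfl)
    · subst hj
      have hXj : ev0 (X j.succ) = X j := by rw [ev0, aeval_X]; simp
      have hiX : incl (X j) = X j.succ := by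
        show rename Fin.succ (X j) = X j.succ
        rw [rename_X]
      rw [hXj, hiX]
      have heq : p * X j.succ - incl (ev0 p) * X j.succ
          = (p - incl (ev0 p)) * X j.succ := by ring
      rw [heq]
      exact Ideal.mul_mem_right _ _ hp

lemma t_dvd_of_ev0_eq_zero {P : MvPolynomial (Fin 3) ℂ} (hP : ev0 P = 0) :
    X (0 : Fin 3) ∣ P := by
  have hmem := sub_incl_ev0_mem P
  rw [hP, map_zero, sub_zero] at hmem
  exact Ideal.mem_span_singleton.mp hmem

theorem statement11 (f g₁ g₂ : MvPolynomial (Fin 2) ℂ)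
    (hfnc : ∀ c : ℂ, f ≠ C c)
    -- `f` has no nonconstant factor in `ℂ[x₁]`
    (hfx1 : ∀ w : Polynomial ℂ, Polynomial.aeval (X (0 : Fin 2)) w ∣ f → w.natDegree = 0)
    -- `f` and `g₁` are coprime
    (hcop : ∀ u : MvPolynomial (Fin 2) ℂ, u ∣ f → u ∣ g₁ → IsUnit u)
    (h h₁ h₂ : MvPolynomial (Fin 2) ℂ)
    -- `h` is a gcd of `f` and `f' = ∂f/∂x₂`, with cofactors `h₁`, `h₂`
    (hdvd₁ : h ∣ f) (hdvd₂ : h ∣ pderiv (1 : Fin 2) f)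
    (hgcd : ∀ u : MvPolynomial (Fin 2) ℂ, u ∣ f → u ∣ pderiv (1 : Fin 2) f → u ∣ h)
    (hco₁ : f = h * h₁) (hco₂ : pderiv (1 : Fin 2) f = h * h₂)
    (F₁ F₂ : MvPolynomial (Fin 3) ℂ)
    (hF₁ : F₁ = (1 - X (0 : Fin 3)) * incl f + X (0 : Fin 3) * incl g₁)
    (hF₂ : F₂ = (1 - X (0 : Fin 3)) * incl (pderiv (1 : Fin 2) f) + X (0 : Fin 3) * incl g₂)
    (I J : Ideal (MvPolynomial (Fin 3) ℂ))
    (hI : I = Ideal.span {F₁, F₂})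
    (hJ : J = I ⊔ Ideal.span {incl (h₂ * g₁ - h₁ * g₂)}) :
    ∀ p : MvPolynomial (Fin 3) ℂ,
      ((X (0 : Fin 3) * p ∈ I) ↔ p ∈ J) ∧
      ((∃ k : ℕ, 1 ≤ k ∧ (X (0 : Fin 3)) ^ k * p ∈ I) ↔ p ∈ J) := by
  set T : MvPolynomial (Fin 3) ℂ := X (0 : Fin 3) with hT
  set D : MvPolynomial (Fin 3) ℂ := incl (h₂ * g₁ - h₁ * g₂) with hD0
  have hif : incl f = incl h * incl h₁ := by rw [hco₁, map_mul]
  have hif' : incl (pderiv (1 : Fin 2) f) = incl h * incl h₂ := by rw [hco₂, map_mul]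
  have hD : D = incl h₂ * incl g₁ - incl h₁ * incl g₂ := by
    rw [hD0, map_sub, map_mul, map_mul]
  -- the two basic syzygies
  have Id1 : incl g₂ * F₁ - incl g₁ * F₂ + (1 - T) * incl h * D = 0 := by
    rw [hF₁, hF₂, hD, hif, hif']
    ring
  have Id2 : incl h₂ * F₁ - incl h₁ * F₂ - T * D = 0 := by
    rw [hF₁, hF₂, hD, hif, hif']
    ring
  -- membership in J
  have memJ : ∀ p : MvPolynomial (Fin 3) ℂ,
      p ∈ J ↔ ∃ a b c : MvPolynomial (Fin 3) ℂ, p = a * F₁ + b * F₂ + c * D := by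
    intro p
    rw [hJ, hI]
    constructor
    · intro hp
      obtain ⟨q, hq, r, hr, hqr⟩ := Submodule.mem_sup.mp hp
      obtain ⟨a, b, hab⟩ := Ideal.mem_span_pair.mp hq
      obtain ⟨c, hc⟩ := Ideal.mem_span_singleton.mp hr
      exact ⟨a, b, c, by rw [← hqr, ← hab, hc]; ring⟩
    · rintro ⟨a, b, c, rfl⟩
      apply Submodule.add_mem
      · exact Submodule.mem_sup_left (Ideal.mem_span_pair.mpr ⟨a, b, rfl⟩)
      · exact Submodule.mem_sup_right (Ideal.mem_span_singleton.mpr ⟨c, mul_comm c D⟩)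
  have heT : ev0 T = 0 := ev0_t
  -- values at t = 0
  have heF₁ : ev0 F₁ = f := by
    rw [hF₁]
    simp only [map_add, map_mul, map_sub, map_one, heT, ev0_incl]
    ring
  have heF₂ : ev0 F₂ = pderiv (1 : Fin 2) f := by
    rw [hF₂]
    simp only [map_add, map_mul, map_sub, map_one, heT, ev0_incl]
    ring
  have heD : ev0 D = h₂ * g₁ - h₁ * g₂ := by rw [hD0, ev0_incl]
  -- main lemma: t is a nonzerodivisor modulo J
  have mainL : ∀ q : MvPolynomial (Fin 3) ℂ, T * q ∈ J → q ∈ J := by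
    intro q hq
    obtain ⟨a, b, c, hrep⟩ := (memJ _).mp hq
    have h1 := congrArg ev0 hrep
    simp only [map_add, map_mul, heT, zero_mul, heF₁, heF₂, heD] at h1
    have hev : (ev0 a) * f + (ev0 b) * pderiv (1 : Fin 2) f
        + (ev0 c) * (h₂ * g₁ - h₁ * g₂) = 0 := by linear_combination -h1
    obtain ⟨s, c₀, hA, hB, hC⟩ :=
      syzygy_classify f g₁ g₂ h h₁ h₂ hfnc hfx1 hcop hgcd hco₁ hco₂
        (ev0 a) (ev0 b) (ev0 c) hev
    have ha' : ev0 (a - (incl c₀ * incl g₂ + incl s * incl h₂)) = 0 := by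
      simp only [map_sub, map_add, map_mul, ev0_incl]
      rw [hA]; ring
    have hb' : ev0 (b + (incl c₀ * incl g₁ + incl s * incl h₁)) = 0 := by
      simp only [map_add, map_mul, ev0_incl]
      rw [hB]; ring
    have hc' : ev0 (c - incl c₀ * ((1 - T) * incl h) + incl s * T) = 0 := by
      simp only [map_add, map_sub, map_mul, map_one, heT, ev0_incl]
      rw [hC]; ring
    obtain ⟨a'', e1⟩ := t_dvd_of_ev0_eq_zero ha'
    obtain ⟨b'', e2⟩ := t_dvd_of_ev0_eq_zero hb'
    obtain ⟨c'', e3⟩ := t_dvd_of_ev0_eq_zero hc'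
    have hkey : T * q = T * (a'' * F₁ + b'' * F₂ + c'' * D) := by
      linear_combination hrep + F₁ * e1 + F₂ * e2 + D * e3
        + incl c₀ * Id1 + incl s * Id2
    have hq' : q = a'' * F₁ + b'' * F₂ + c'' * D :=
      mul_left_cancel₀ (X_ne_zero (0 : Fin 3)) hkey
    exact (memJ q).mpr ⟨a'', b'', c'', hq'⟩
  -- easy direction: t·J ⊆ I
  have easyL : ∀ p : MvPolynomial (Fin 3) ℂ, p ∈ J → T * p ∈ I := by
    intro p hp
    obtain ⟨a, b, c, hrep⟩ := (memJ _).mp hp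
    rw [hI]
    exact Ideal.mem_span_pair.mpr ⟨T * a + c * incl h₂, T * b - c * incl h₁,
      by linear_combination -T * hrep + c * Id2⟩
  have hIJ : I ≤ J := hJ ▸ le_sup_left
  have satL : ∀ (k : ℕ) (q : MvPolynomial (Fin 3) ℂ), T ^ k * q ∈ J → q ∈ J := by
    intro k
    induction k with
    | zero => intro q hq; simpa using hq
    | succ n ih =>
      intro q hq
      have : T ^ n * (T * q) ∈ J := by
        rw [show T ^ n * (T * q) = T ^ (n + 1) * q from by ring]
        exact hq
      exact mainL q (ih (T * q) this)
  intro p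
  constructor
  · constructor
    · intro hp
      exact mainL p (hIJ hp)
    · intro hp
      exact easyL p hp
  · constructor
    · rintro ⟨k, _, hk⟩
      exact satL k p (hIJ hk)
    · intro hp
      exact ⟨1, le_refl 1, by rw [pow_one]; exact easyL p hp⟩
end
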